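/- Let z = |z'| where z' ∼ N(0, σ²). Then E[z² · erf(z/√2)] = 2σ² arctan(σ)/π + 2σ³/(π(σ²+1)), E[erf(z/√2)] = 2 arctan(σ)/π, E[z · e^{−z²/2}] = 2σ/(√(2π)(σ²+1)), and E[z] = 2σ/√(2π). -/

import Mathlib

open MeasureTheory ProbabilityTheory Real
open Filter Set
open scoped NNReal ENNReal

noncomputable def erf (t : ℝ) : ℝ := (2 / Real.sqrt π) * ∫ u in (0:ℝ)..t, Real.exp (-u ^ 2)

lemma erf_hasDerivAt (t : ℝ) :
    HasDerivAt erf (2 / Real.sqrt π * Real.exp (-t ^ 2)) t := by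
  have h : HasDerivAt (fun t : ℝ => ∫ u in (0:ℝ)..t, Real.exp (-u ^ 2))
      (Real.exp (-t ^ 2)) t := by
    apply intervalIntegral.integral_hasDerivAt_right
    · exact (Continuous.intervalIntegrable (by continuity) _ _)
    · exact (Continuous.stronglyMeasurable (by continuity)).stronglyMeasurableAtFilter
    · exact (Continuous.continuousAt (by continuity))
  exact h.const_mul _

lemma erf_continuous : Continuous erf :=
  continuous_iff_continuousAt.2 fun t => (erf_hasDerivAt t).continuousAt

lemma erf_zero : erf 0 = 0 := by simp [erf]

lemma abs_erf_le (t : ℝ) : |erf t| ≤ 2 / Real.sqrt π * |t| := by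
  have h : ‖∫ u in (0:ℝ)..t, Real.exp (-u ^ 2)‖ ≤ 1 * |t - 0| := by
    apply intervalIntegral.norm_integral_le_of_norm_le_const
    intro x _
    rw [Real.norm_eq_abs, abs_of_pos (Real.exp_pos _)]
    exact Real.exp_le_one_iff.2 (by nlinarith [sq_nonneg x])
  rw [erf, abs_mul, abs_of_pos (by positivity : (0:ℝ) < 2 / Real.sqrt π)]
  have := h
  simp only [one_mul, sub_zero] at this
  exact mul_le_mul_of_nonneg_left (this) (by positivity)

lemma integral_Ioi_id_mul_exp {c : ℝ} (hc : 0 < c) :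
    ∫ x in Ioi (0:ℝ), x * Real.exp (-c * x ^ 2) = 1 / (2 * c) := by
  have hderiv : ∀ x ∈ Ici (0:ℝ),
      HasDerivAt (fun x : ℝ => -Real.exp (-c * x ^ 2) / (2 * c))
        (x * Real.exp (-c * x ^ 2)) x := by
    intro x _
    have h1 : HasDerivAt (fun x : ℝ => -c * x ^ 2) (-c * (2 * x)) x := by
      simpa using ((hasDerivAt_pow 2 x).const_mul (-c))
    have h2 := (h1.exp).neg.div_const (2 * c)
    refine h2.congr_deriv ?_
    field_simp
  have hint : IntegrableOn (fun x : ℝ => x * Real.exp (-c * x ^ 2)) (Ioi 0) :=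
    (integrable_mul_exp_neg_mul_sq hc).integrableOn
  have htend : Tendsto (fun x : ℝ => -Real.exp (-c * x ^ 2) / (2 * c)) atTop (nhds 0) := by
    have : Tendsto (fun x : ℝ => -c * x ^ 2) atTop atBot := by
      apply Tendsto.const_mul_atTop_of_neg (by linarith)
      exact tendsto_pow_atTop (by norm_num)
    have := (Real.tendsto_exp_atBot.comp this).neg.div_const (2 * c)
    simpa using this
  have := integral_Ioi_of_hasDerivAt_of_tendsto' hderiv hint htend
  rw [this]
  field_simp
  simp

lemma integrableOn_pow_mul_exp {c : ℝ} (hc : 0 < c) (n : ℕ) :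
    IntegrableOn (fun x : ℝ => x ^ n * Real.exp (-c * x ^ 2)) (Ioi 0) := by
  have h := integrableOn_rpow_mul_exp_neg_mul_sq hc (s := (n : ℝ)) (by
    have : (0:ℝ) ≤ n := Nat.cast_nonneg n
    linarith)
  refine h.congr_fun (fun x _ => ?_) measurableSet_Ioi
  simp only [Real.rpow_natCast]

lemma integrableOn_erf_mul {b c : ℝ} (hc : 0 < c) (n : ℕ) :
    IntegrableOn (fun x : ℝ => x ^ n * erf (b * x) * Real.exp (-c * x ^ 2)) (Ioi 0) := by
  have hbound := (integrableOn_pow_mul_exp hc (n + 1)).const_mul (2 / Real.sqrt π * |b|)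
  refine Integrable.mono' hbound ?_ ?_
  · apply Continuous.aestronglyMeasurable
    exact ((continuous_pow n).mul (erf_continuous.comp (continuous_const.mul continuous_id))).mul
      (Real.continuous_exp.comp (by continuity))
  · filter_upwards [ae_restrict_mem measurableSet_Ioi] with x hx
    have hx0 : (0:ℝ) < x := hx
    have h1 : |erf (b * x)| ≤ 2 / Real.sqrt π * (|b| * x) := by
      have := abs_erf_le (b * x)
      rwa [abs_mul, abs_of_pos hx0] at this
    rw [Real.norm_eq_abs, abs_mul, abs_mul, abs_of_pos (Real.exp_pos _),
      abs_of_pos (pow_pos hx0 n)]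
    calc x ^ n * |erf (b * x)| * Real.exp (-c * x ^ 2)
        ≤ x ^ n * (2 / Real.sqrt π * (|b| * x)) * Real.exp (-c * x ^ 2) := by
          apply mul_le_mul_of_nonneg_right _ (Real.exp_pos _).le
          exact mul_le_mul_of_nonneg_left h1 (pow_pos hx0 n).le
      _ = 2 / Real.sqrt π * |b| * (x ^ (n + 1) * Real.exp (-c * x ^ 2)) := by ring

lemma integral_Ioi_erf_mul_exp {c : ℝ} (hc : 0 < c) (b : ℝ) :
    ∫ x in Ioi (0:ℝ), erf (b * x) * Real.exp (-c * x ^ 2)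
      = Real.arctan (b / Real.sqrt c) / (Real.sqrt c * Real.sqrt π) := by
  set g : ℝ → ℝ := fun b => ∫ x in Ioi (0:ℝ), erf (b * x) * Real.exp (-c * x ^ 2) with hg
  have hderiv : ∀ b₀ : ℝ, HasDerivAt g (1 / (Real.sqrt π * (c + b₀ ^ 2))) b₀ := by
    intro b₀
    have hmeas : ∀ᶠ b in nhds b₀, AEStronglyMeasurable
        (fun x : ℝ => erf (b * x) * Real.exp (-c * x ^ 2)) (volume.restrict (Ioi 0)) :=
      Filter.Eventually.of_forall (fun b => ((erf_continuous.comp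
        (continuous_const.mul continuous_id)).mul
        (Real.continuous_exp.comp (by continuity))).aestronglyMeasurable)
    have hF_int : Integrable (fun x : ℝ => erf (b₀ * x) * Real.exp (-c * x ^ 2))
        (volume.restrict (Ioi 0)) := by simpa [IntegrableOn] using (integrableOn_erf_mul hc 0 (b := b₀))
    have hF'_meas : AEStronglyMeasurable
        (fun x : ℝ => 2 / Real.sqrt π * Real.exp (-(b₀ ^ 2) * x ^ 2) * x
          * Real.exp (-c * x ^ 2)) (volume.restrict (Ioi 0)) :=
      ((continuous_const.mul (Real.continuous_exp.comp (by continuity))).mul continuous_id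
        |>.mul (Real.continuous_exp.comp (by continuity))).aestronglyMeasurable
    have hbound_int : Integrable (fun x : ℝ => 2 / Real.sqrt π * (x * Real.exp (-c * x ^ 2)))
        (volume.restrict (Ioi 0)) :=
      ((integrableOn_pow_mul_exp hc 1).congr_fun (fun x _ => by ring_nf)
        measurableSet_Ioi).const_mul _
    have h_bound : ∀ᵐ x ∂(volume.restrict (Ioi (0:ℝ))), ∀ b ∈ Metric.ball b₀ 1,
        ‖2 / Real.sqrt π * Real.exp (-(b ^ 2) * x ^ 2) * x * Real.exp (-c * x ^ 2)‖
          ≤ 2 / Real.sqrt π * (x * Real.exp (-c * x ^ 2)) := by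
      filter_upwards [ae_restrict_mem measurableSet_Ioi] with x hx
      intro b hb
      have hx0 : (0:ℝ) < x := hx
      rw [Real.norm_eq_abs]
      have habs : |2 / Real.sqrt π * Real.exp (-(b ^ 2) * x ^ 2) * x * Real.exp (-c * x ^ 2)|
          = 2 / Real.sqrt π * Real.exp (-(b ^ 2) * x ^ 2) * x * Real.exp (-c * x ^ 2) := by
        apply abs_of_nonneg; positivity
      rw [habs]
      have h1 : Real.exp (-(b ^ 2) * x ^ 2) ≤ 1 :=
        Real.exp_le_one_iff.2 (by nlinarith [sq_nonneg (b * x)])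
      calc 2 / Real.sqrt π * Real.exp (-(b ^ 2) * x ^ 2) * x * Real.exp (-c * x ^ 2)
          ≤ 2 / Real.sqrt π * 1 * x * Real.exp (-c * x ^ 2) := by
            apply mul_le_mul_of_nonneg_right _ (Real.exp_pos _).le
            apply mul_le_mul_of_nonneg_right _ hx0.le
            exact mul_le_mul_of_nonneg_left h1 (by positivity)
        _ = 2 / Real.sqrt π * (x * Real.exp (-c * x ^ 2)) := by ring
    have h_diff : ∀ᵐ x ∂(volume.restrict (Ioi (0:ℝ))), ∀ b ∈ Metric.ball b₀ 1,
        HasDerivAt (fun b : ℝ => erf (b * x) * Real.exp (-c * x ^ 2))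
          (2 / Real.sqrt π * Real.exp (-(b ^ 2) * x ^ 2) * x * Real.exp (-c * x ^ 2)) b := by
      filter_upwards [ae_restrict_mem measurableSet_Ioi] with x hx
      intro b hb
      have h1 : HasDerivAt (fun b : ℝ => erf (b * x))
          (2 / Real.sqrt π * Real.exp (-(b * x) ^ 2) * x) b := by
        have := (erf_hasDerivAt (b * x)).comp b ((hasDerivAt_id b).mul_const x)
        simpa [Function.comp_def] using this
      have h2 := h1.mul_const (Real.exp (-c * x ^ 2))
      have e : -(b * x) ^ 2 = -(b ^ 2) * x ^ 2 := by ring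
      rw [e] at h2
      exact h2
    have key := hasDerivAt_integral_of_dominated_loc_of_deriv_le
      (F' := fun (b : ℝ) (x : ℝ) => 2 / Real.sqrt π * Real.exp (-(b ^ 2) * x ^ 2) * x
        * Real.exp (-c * x ^ 2)) (Metric.ball_mem_nhds b₀ one_pos) hmeas hF_int hF'_meas h_bound hbound_int h_diff
    · obtain ⟨_, hd⟩ := key
      have hval : ∫ x in Ioi (0:ℝ), 2 / Real.sqrt π * Real.exp (-(b₀ ^ 2) * x ^ 2) * x
          * Real.exp (-c * x ^ 2) = 1 / (Real.sqrt π * (c + b₀ ^ 2)) := by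
        have hre : ∀ x : ℝ, 2 / Real.sqrt π * Real.exp (-(b₀ ^ 2) * x ^ 2) * x
            * Real.exp (-c * x ^ 2) = 2 / Real.sqrt π * (x * Real.exp (-(c + b₀ ^ 2) * x ^ 2)) := by
          intro x
          rw [show -(c + b₀ ^ 2) * x ^ 2 = -(b₀ ^ 2) * x ^ 2 + -c * x ^ 2 by ring,
            Real.exp_add]
          ring
        simp_rw [hre]
        rw [integral_const_mul, integral_Ioi_id_mul_exp (by positivity)]
        have hπ : Real.sqrt π ≠ 0 := by positivity
        field_simp
      rwa [hval] at hd
  have hzero : g 0 = 0 := by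
    rw [hg]
    simp [erf_zero]
  have hftc : ∫ t in (0:ℝ)..b, 1 / (Real.sqrt π * (c + t ^ 2)) = g b - g 0 := by
    apply intervalIntegral.integral_eq_sub_of_hasDerivAt
    · exact fun t _ => hderiv t
    · apply Continuous.intervalIntegrable
      apply continuous_const.div
      · continuity
      · intro t; positivity
  have hsc : 0 < Real.sqrt c := Real.sqrt_pos.2 hc
  have hπ : (0:ℝ) < Real.sqrt π := Real.sqrt_pos.2 Real.pi_pos
  have h1 : (∫ t in (0:ℝ)..b, 1 / (Real.sqrt π * (c + t ^ 2)))
      = (1 / (Real.sqrt π * c)) * ∫ t in (0:ℝ)..b, 1 / (1 + (t / Real.sqrt c) ^ 2) := by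
    rw [← intervalIntegral.integral_const_mul]
    apply intervalIntegral.integral_congr
    intro t _
    have hct : 0 < c + t ^ 2 := by positivity
    have e : 1 + (t / Real.sqrt c) ^ 2 = (c + t ^ 2) / c := by
      rw [div_pow, Real.sq_sqrt hc.le]
      field_simp
    simp only
    rw [e]
    field_simp
  have h2 : (∫ t in (0:ℝ)..b, 1 / (1 + (t / Real.sqrt c) ^ 2))
      = Real.sqrt c * Real.arctan (b / Real.sqrt c) := by
    rw [intervalIntegral.integral_comp_div (f := fun u : ℝ => 1 / (1 + u ^ 2)) hsc.ne']
    rw [zero_div, integral_one_div_one_add_sq, Real.arctan_zero, sub_zero, smul_eq_mul]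
  have heq := hftc
  rw [hzero, sub_zero, h1, h2] at heq
  show g b = _
  rw [← heq]
  field_simp
  have hs : Real.sqrt c * Real.sqrt c = c := Real.mul_self_sqrt hc.le
  linear_combination (Real.arctan (b / Real.sqrt c)) * hs

lemma tendsto_pow_mul_exp_sq {c : ℝ} (hc : 0 < c) (n : ℕ) :
    Tendsto (fun x : ℝ => x ^ n * Real.exp (-c * x ^ 2)) atTop (nhds 0) := by
  have h := rpow_mul_exp_neg_mul_sq_isLittleO_exp_neg hc (n : ℝ)
  have h2 : (fun x : ℝ => x ^ n * Real.exp (-c * x ^ 2)) =o[atTop]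
      fun x : ℝ => Real.exp (-(1 / 2) * x) := by
    refine h.congr' ?_ (EventuallyEq.refl _ _)
    filter_upwards [eventually_gt_atTop (0:ℝ)] with x hx
    rw [Real.rpow_natCast]
  have h3 : Tendsto (fun x : ℝ => Real.exp (-(1 / 2) * x)) atTop (nhds 0) := by
    apply Real.tendsto_exp_atBot.comp
    exact (Tendsto.const_mul_atTop_of_neg (by norm_num : (-(1:ℝ)/2) < 0)
      tendsto_id).congr (fun x => by simp; ring)
  exact h2.isBigO.trans_tendsto h3

lemma integral_Ioi_sq_mul_erf {c : ℝ} (hc : 0 < c) (b : ℝ) :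
    ∫ x in Ioi (0:ℝ), x ^ 2 * erf (b * x) * Real.exp (-c * x ^ 2)
      = 1 / (2 * c) * (Real.arctan (b / Real.sqrt c) / (Real.sqrt c * Real.sqrt π))
        + b / (c * Real.sqrt π) * (1 / (2 * (c + b ^ 2))) := by
  set F : ℝ → ℝ := fun x => -(1 / (2 * c)) * (x * erf (b * x) * Real.exp (-c * x ^ 2)) with hF
  set G : ℝ → ℝ := fun x => x ^ 2 * erf (b * x) * Real.exp (-c * x ^ 2)
    - 1 / (2 * c) * (erf (b * x) * Real.exp (-c * x ^ 2))
    - b / (c * Real.sqrt π) * (x * Real.exp (-(c + b ^ 2) * x ^ 2)) with hG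
  have hderiv : ∀ x ∈ Ici (0:ℝ), HasDerivAt F (G x) x := by
    intro x _
    have h1 : HasDerivAt (fun x : ℝ => erf (b * x))
        (2 / Real.sqrt π * Real.exp (-(b * x) ^ 2) * b) x := by
      have := (erf_hasDerivAt (b * x)).comp x ((hasDerivAt_id x).const_mul b)
      simpa [Function.comp_def] using this
    have h2 : HasDerivAt (fun x : ℝ => Real.exp (-c * x ^ 2))
        (Real.exp (-c * x ^ 2) * (-c * (2 * x))) x := by
      have hp : HasDerivAt (fun x : ℝ => -c * x ^ 2) (-c * (2 * x)) x := by
        simpa using ((hasDerivAt_pow 2 x).const_mul (-c))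
      exact hp.exp
    have h3 := ((hasDerivAt_id x).mul h1).mul h2
    have h4 := h3.const_mul (-(1 / (2 * c)))
    have hexp : Real.exp (-(b * x) ^ 2) * Real.exp (-c * x ^ 2)
        = Real.exp (-(c + b ^ 2) * x ^ 2) := by
      rw [← Real.exp_add]; congr 1; ring
    refine h4.congr_deriv ?_
    simp only [hG, id_eq, one_mul, Pi.mul_apply]
    rw [← hexp]
    field_simp
    ring
  have ebase : IntegrableOn (fun x : ℝ => erf (b * x) * Real.exp (-c * x ^ 2)) (Ioi 0) :=
    (integrableOn_erf_mul (b := b) hc 0).congr_fun (fun x _ => by ring) measurableSet_Ioi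
  have ebase2 : IntegrableOn (fun x : ℝ => x * Real.exp (-(c + b ^ 2) * x ^ 2)) (Ioi 0) :=
    (integrableOn_pow_mul_exp (by positivity : (0:ℝ) < c + b ^ 2) 1).congr_fun
      (fun x _ => by ring) measurableSet_Ioi
  have e1 : IntegrableOn (fun x : ℝ => x ^ 2 * erf (b * x) * Real.exp (-c * x ^ 2)) (Ioi 0) :=
    integrableOn_erf_mul hc 2
  have e2 : IntegrableOn (fun x : ℝ => 1 / (2 * c) * (erf (b * x) * Real.exp (-c * x ^ 2)))
      (Ioi 0) := ebase.const_mul _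
  have e3 : IntegrableOn (fun x : ℝ => b / (c * Real.sqrt π)
      * (x * Real.exp (-(c + b ^ 2) * x ^ 2))) (Ioi 0) := ebase2.const_mul _
  have e12 : IntegrableOn (fun x : ℝ => x ^ 2 * erf (b * x) * Real.exp (-c * x ^ 2)
      - 1 / (2 * c) * (erf (b * x) * Real.exp (-c * x ^ 2))) (Ioi 0) := e1.sub e2
  have hGint : IntegrableOn G (Ioi (0:ℝ)) := e12.sub e3
  have htend : Tendsto F atTop (nhds 0) := by
    apply squeeze_zero_norm' (a := fun x : ℝ => 1 / (2 * c) * (2 / Real.sqrt π * |b|)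
      * (x ^ 2 * Real.exp (-c * x ^ 2))) ?_ ?_
    · filter_upwards [eventually_gt_atTop (0:ℝ)] with x hx
      have h1 : |erf (b * x)| ≤ 2 / Real.sqrt π * (|b| * x) := by
        have := abs_erf_le (b * x)
        rwa [abs_mul, abs_of_pos hx] at this
      rw [hF]
      rw [Real.norm_eq_abs, abs_mul, abs_mul, abs_mul, abs_of_pos hx,
        abs_of_pos (Real.exp_pos _)]
      have : |(-(1 / (2 * c)))| = 1 / (2 * c) := by
        rw [abs_neg, abs_of_pos (by positivity)]
      rw [this]
      calc 1 / (2 * c) * (x * |erf (b * x)| * Real.exp (-c * x ^ 2))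
          ≤ 1 / (2 * c) * (x * (2 / Real.sqrt π * (|b| * x)) * Real.exp (-c * x ^ 2)) := by
            apply mul_le_mul_of_nonneg_left _ (by positivity)
            apply mul_le_mul_of_nonneg_right _ (Real.exp_pos _).le
            exact mul_le_mul_of_nonneg_left h1 hx.le
        _ = 1 / (2 * c) * (2 / Real.sqrt π * |b|) * (x ^ 2 * Real.exp (-c * x ^ 2)) := by ring
    · have := (tendsto_pow_mul_exp_sq hc 2).const_mul (1 / (2 * c) * (2 / Real.sqrt π * |b|))
      simpa using this
  have hkey := integral_Ioi_of_hasDerivAt_of_tendsto' hderiv hGint htend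
  have hF0 : F 0 = 0 := by simp [hF]
  rw [hF0, sub_zero] at hkey
  have hsplit : ∫ x in Ioi (0:ℝ), G x
      = (∫ x in Ioi (0:ℝ), x ^ 2 * erf (b * x) * Real.exp (-c * x ^ 2))
        - (∫ x in Ioi (0:ℝ), 1 / (2 * c) * (erf (b * x) * Real.exp (-c * x ^ 2)))
        - ∫ x in Ioi (0:ℝ), b / (c * Real.sqrt π) * (x * Real.exp (-(c + b ^ 2) * x ^ 2)) := by
    rw [hG]
    rw [integral_sub e12 e3, integral_sub e1 e2]
  rw [hkey] at hsplit
  have hv2 : (∫ x in Ioi (0:ℝ), 1 / (2 * c) * (erf (b * x) * Real.exp (-c * x ^ 2)))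
      = 1 / (2 * c) * (Real.arctan (b / Real.sqrt c) / (Real.sqrt c * Real.sqrt π)) := by
    rw [integral_const_mul, integral_Ioi_erf_mul_exp hc]
  have hv3 : (∫ x in Ioi (0:ℝ), b / (c * Real.sqrt π) * (x * Real.exp (-(c + b ^ 2) * x ^ 2)))
      = b / (c * Real.sqrt π) * (1 / (2 * (c + b ^ 2))) := by
    rw [integral_const_mul, integral_Ioi_id_mul_exp (by positivity)]
  rw [hv2, hv3] at hsplit
  linarith

lemma integral_gaussianReal_eq {v : ℝ≥0} (hv : v ≠ 0) (f : ℝ → ℝ) :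
    ∫ x, f x ∂(gaussianReal 0 v) = ∫ x, gaussianPDFReal 0 v x * f x := by
  rw [gaussianReal_of_var_ne_zero 0 hv, gaussianPDF_def]
  have : ∀ x : ℝ, ENNReal.ofReal (gaussianPDFReal 0 v x)
      = ((Real.toNNReal (gaussianPDFReal 0 v x) : ℝ≥0) : ℝ≥0∞) := fun x => rfl
  simp_rw [this]
  rw [integral_withDensity_eq_integral_smul
    ((measurable_gaussianPDFReal 0 v).real_toNNReal) f]
  congr 1
  funext x
  rw [NNReal.smul_def, smul_eq_mul, Real.coe_toNNReal _ (gaussianPDFReal_nonneg 0 v x)]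

lemma gauss_abs_integral {σ : ℝ} (hσ : 0 < σ) (F : ℝ → ℝ) :
    ∫ x, F |x| ∂(gaussianReal 0 ⟨σ ^ 2, sq_nonneg σ⟩)
      = 2 * ∫ t in Ioi (0:ℝ),
          (Real.sqrt (2 * π) * σ)⁻¹ * Real.exp (-(2 * σ ^ 2)⁻¹ * t ^ 2) * F t := by
  have hv : (⟨σ ^ 2, sq_nonneg σ⟩ : ℝ≥0) ≠ 0 := by
    intro h
    have := congrArg (fun x : ℝ≥0 => (x : ℝ)) h
    change σ ^ 2 = 0 at this
    nlinarith
  rw [integral_gaussianReal_eq hv (fun x => F |x|)]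
  have hfun : (fun x : ℝ => gaussianPDFReal 0 ⟨σ ^ 2, sq_nonneg σ⟩ x * F |x|)
      = fun x : ℝ => (fun t : ℝ =>
          (Real.sqrt (2 * π) * σ)⁻¹ * Real.exp (-(2 * σ ^ 2)⁻¹ * t ^ 2) * F t) |x| := by
    funext x
    simp only [gaussianPDFReal, NNReal.coe_mk, sub_zero]
    have h1 : Real.sqrt (2 * π * σ ^ 2) = Real.sqrt (2 * π) * σ := by
      rw [Real.sqrt_mul (by positivity), Real.sqrt_sq hσ.le]
    have h2 : -x ^ 2 / (2 * σ ^ 2) = -(2 * σ ^ 2)⁻¹ * |x| ^ 2 := by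
      rw [sq_abs]; field_simp
    show (√(2 * π * σ ^ 2))⁻¹ * rexp (-x ^ 2 / (2 * σ ^ 2)) * F |x| = _
    rw [h1, h2]
  rw [hfun]
  exact integral_comp_abs (f := fun t : ℝ =>
    (Real.sqrt (2 * π) * σ)⁻¹ * Real.exp (-(2 * σ ^ 2)⁻¹ * t ^ 2) * F t)

theorem half_normal_moment_identities (σ : ℝ) (hσ : 0 < σ) :
    (∫ x, |x| ^ 2 * erf (|x| / Real.sqrt 2)
        ∂(gaussianReal 0 ⟨σ ^ 2, sq_nonneg σ⟩)
      = 2 * σ ^ 2 * Real.arctan σ / π + 2 * σ ^ 3 / (π * (σ ^ 2 + 1))) ∧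
    (∫ x, erf (|x| / Real.sqrt 2) ∂(gaussianReal 0 ⟨σ ^ 2, sq_nonneg σ⟩)
      = 2 * Real.arctan σ / π) ∧
    (∫ x, |x| * Real.exp (-|x| ^ 2 / 2) ∂(gaussianReal 0 ⟨σ ^ 2, sq_nonneg σ⟩)
      = 2 * σ / (Real.sqrt (2 * π) * (σ ^ 2 + 1))) ∧
    (∫ x, |x| ∂(gaussianReal 0 ⟨σ ^ 2, sq_nonneg σ⟩)
      = 2 * σ / Real.sqrt (2 * π)) := by
  have hc : (0:ℝ) < (2 * σ ^ 2)⁻¹ := by positivity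
  set c : ℝ := (2 * σ ^ 2)⁻¹ with hcdef
  set K : ℝ := (Real.sqrt (2 * π) * σ)⁻¹ with hKdef
  have hs2 : Real.sqrt 2 * Real.sqrt 2 = 2 := Real.mul_self_sqrt (by norm_num)
  have hsp : Real.sqrt π * Real.sqrt π = π := Real.mul_self_sqrt Real.pi_pos.le
  have hs2pos : (0:ℝ) < Real.sqrt 2 := Real.sqrt_pos.2 (by norm_num)
  have hsppos : (0:ℝ) < Real.sqrt π := Real.sqrt_pos.2 Real.pi_pos
  have h2π : Real.sqrt (2 * π) = Real.sqrt 2 * Real.sqrt π :=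
    Real.sqrt_mul (by norm_num) π
  have hsqrtc : Real.sqrt c = (Real.sqrt 2 * σ)⁻¹ := by
    rw [hcdef, Real.sqrt_inv, Real.sqrt_mul (by norm_num), Real.sqrt_sq hσ.le]
  have harc : (Real.sqrt 2)⁻¹ / Real.sqrt c = σ := by
    rw [hsqrtc]
    field_simp
  -- moment 4
  have m4 : ∫ x, |x| ∂(gaussianReal 0 ⟨σ ^ 2, sq_nonneg σ⟩)
      = 2 * σ / Real.sqrt (2 * π) := by
    rw [gauss_abs_integral hσ (fun t => t), ← hKdef, ← hcdef]
    have : ∀ t : ℝ, K * Real.exp (-c * t ^ 2) * t = K * (t * Real.exp (-c * t ^ 2)) :=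
      fun t => by ring
    simp_rw [this, integral_const_mul, integral_Ioi_id_mul_exp hc]
    rw [hKdef, hcdef, h2π]
    field_simp
  -- moment 3
  have m3 : ∫ x, |x| * Real.exp (-|x| ^ 2 / 2) ∂(gaussianReal 0 ⟨σ ^ 2, sq_nonneg σ⟩)
      = 2 * σ / (Real.sqrt (2 * π) * (σ ^ 2 + 1)) := by
    rw [gauss_abs_integral hσ (fun t => t * Real.exp (-t ^ 2 / 2)), ← hKdef, ← hcdef]
    have hc' : (0:ℝ) < c + 1 / 2 := by positivity
    have : ∀ t : ℝ, K * Real.exp (-c * t ^ 2) * (t * Real.exp (-t ^ 2 / 2))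
        = K * (t * Real.exp (-(c + 1 / 2) * t ^ 2)) := by
      intro t
      rw [show -(c + 1 / 2) * t ^ 2 = -c * t ^ 2 + -t ^ 2 / 2 by ring, Real.exp_add]
      ring
    simp_rw [this, integral_const_mul, integral_Ioi_id_mul_exp hc']
    rw [hKdef, hcdef, h2π]
    have hσ' : (0:ℝ) < σ ^ 2 + 1 := by positivity
    field_simp
    ring
  -- moment 2
  have m2 : ∫ x, erf (|x| / Real.sqrt 2) ∂(gaussianReal 0 ⟨σ ^ 2, sq_nonneg σ⟩)
      = 2 * Real.arctan σ / π := by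
    rw [gauss_abs_integral hσ (fun t => erf (t / Real.sqrt 2)), ← hKdef, ← hcdef]
    have : ∀ t : ℝ, K * Real.exp (-c * t ^ 2) * erf (t / Real.sqrt 2)
        = K * (erf ((Real.sqrt 2)⁻¹ * t) * Real.exp (-c * t ^ 2)) := by
      intro t
      rw [div_eq_inv_mul]
      ring
    simp_rw [this, integral_const_mul, integral_Ioi_erf_mul_exp hc, harc, hsqrtc,
      hKdef, h2π]
    field_simp
    linear_combination (-1) * hsp
  -- moment 1
  have m1 : ∫ x, |x| ^ 2 * erf (|x| / Real.sqrt 2) ∂(gaussianReal 0 ⟨σ ^ 2, sq_nonneg σ⟩)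
      = 2 * σ ^ 2 * Real.arctan σ / π + 2 * σ ^ 3 / (π * (σ ^ 2 + 1)) := by
    rw [gauss_abs_integral hσ (fun t => t ^ 2 * erf (t / Real.sqrt 2)), ← hKdef, ← hcdef]
    have : ∀ t : ℝ, K * Real.exp (-c * t ^ 2) * (t ^ 2 * erf (t / Real.sqrt 2))
        = K * (t ^ 2 * erf ((Real.sqrt 2)⁻¹ * t) * Real.exp (-c * t ^ 2)) := by
      intro t
      rw [div_eq_inv_mul]
      ring
    simp_rw [this, integral_const_mul, integral_Ioi_sq_mul_erf hc, harc, hsqrtc,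
      hKdef, h2π, hcdef]
    have hb2 : ((Real.sqrt 2)⁻¹ : ℝ) ^ 2 = 1 / 2 := by
      rw [inv_pow, sq, hs2]
      norm_num
    rw [hb2]
    have hσ' : (0:ℝ) < σ ^ 2 + 1 := by positivity
    field_simp
    ring_nf
    have hs2sq : Real.sqrt 2 ^ 2 = 2 := Real.sq_sqrt (by norm_num)
    have hspsq : Real.sqrt π ^ 2 = π := Real.sq_sqrt Real.pi_pos.le
    have hsp3 : Real.sqrt π ^ 3 = π * Real.sqrt π := by
      rw [pow_succ, hspsq]
    simp only [hs2sq, hsp3, hspsq]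
    field_simp
  exact ⟨m1, m2, m3, m4⟩
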